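/- Let A be a unital C*-algebra with a tracial state τ, and let u, v be unitaries in A with ‖uvu*v* − 1‖ < 2 (so that log(uvu*v*) is defined by continuous functional calculus with the principal branch). If additionally w is a unitary commuting with log computations in the sense that ‖uwu*w* − 1‖ < 2 and ‖u(vw)u*(vw)* − 1‖ < 2, and the three products all avoid −1 in their spectra along the natural homotopies, then (1/2πi)·τ(log(u(vw)u*(vw)*)) = (1/2πi)·τ(log(uvu*v*)) + (1/2πi)·τ(log(uwu*w*)) provided the pairwise commutator norms are sufficiently small (below a universal constant). -/

import Mathlib

/-- A tracial state on a unital C*-algebra. -/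
def IsTracialState {A : Type*} [Ring A] [StarRing A] [Algebra ℂ A] [TopologicalSpace A]
    (τ : A →ₗ[ℂ] ℂ) : Prop :=
  Continuous τ ∧ τ 1 = 1 ∧ (∀ a : A, 0 ≤ (τ (star a * a)).re ∧ (τ (star a * a)).im = 0) ∧
    ∀ a b : A, τ (a * b) = τ (b * a)



noncomputable section

namespace Stmt18

open Complex Metric

/-- Taylor coefficients of `log` at `1`. -/
def co (n : ℕ) : ℂ := (-1) ^ (n + 1) / n

lemma co_zero : co 0 = 0 := by simp [co]

lemma natCast_succ_ne (m : ℕ) : ((m + 1 : ℕ) : ℂ) ≠ 0 :=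
  Nat.cast_ne_zero.2 (Nat.succ_ne_zero m)

lemma norm_co_le (n : ℕ) : ‖co n‖ ≤ 1 := by
  rcases n with _ | m
  · simp [co_zero]
  · simp only [co, norm_div, norm_pow, norm_neg, norm_one, one_pow, Complex.norm_natCast]
    rw [div_le_one (by positivity)]
    exact_mod_cast Nat.one_le_iff_ne_zero.2 (Nat.succ_ne_zero m)

lemma co_succ_mul (k : ℕ) : co (k + 1) * (((k + 1 : ℕ)) : ℂ) = (-1) ^ k := by
  rw [co, div_mul_cancel₀ _ (natCast_succ_ne k)]
  rw [pow_succ, pow_succ]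
  ring

lemma norm_co_mul_n_le (n : ℕ) : ‖co n * ((n : ℕ) : ℂ)‖ ≤ 1 := by
  rcases n with _ | m
  · simp [co_zero]
  · rw [co_succ_mul]
    simp

variable {A : Type*} [CStarAlgebra A]

/-- The `log` power series at an element. -/
def lseries (z : A) : A := ∑' n : ℕ, co n • (z - 1) ^ n

/-- Geometric-series inverse. -/
def geomInv (z : A) : A := ∑' k : ℕ, (1 - z) ^ k

lemma mul_geomInv {z : A} (h : ‖1 - z‖ < 1) : z * geomInv z = 1 := by
  have := mul_neg_geom_series (1 - z) h
  simpa [geomInv] using this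

lemma geomInv_mul {z : A} (h : ‖1 - z‖ < 1) : geomInv z * z = 1 := by
  have := geom_series_mul_neg (1 - z) h
  simpa [geomInv] using this

lemma norm_pow_le_of_le {x : A} {r : ℝ} (hr0 : 0 ≤ r) (h : ‖x‖ ≤ r) (n : ℕ) (hn : n ≠ 0) :
    ‖x ^ n‖ ≤ r ^ n :=
  (norm_pow_le' x (Nat.pos_of_ne_zero hn)).trans (by gcongr)

lemma summable_lterm {z : A} {r : ℝ} (hr : r < 1) (h : ‖z - 1‖ ≤ r) :
    Summable fun n : ℕ => co n • (z - 1) ^ n := by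
  have hr0 : 0 ≤ r := le_trans (norm_nonneg _) h
  refine Summable.of_norm_bounded (g := fun n => r ^ n) (summable_geometric_of_lt_one hr0 hr) ?_
  intro n
  rcases eq_or_ne n 0 with rfl | hn
  · simp [co_zero]
  calc ‖co n • (z - 1) ^ n‖ ≤ ‖co n‖ * ‖(z - 1) ^ n‖ := norm_smul_le _ _
    _ ≤ 1 * r ^ n := by
        exact mul_le_mul (norm_co_le n) (norm_pow_le_of_le hr0 h n hn)
          (norm_nonneg _) zero_le_one
    _ = r ^ n := one_mul _

end Stmt18

namespace Stmt18x
open Stmt18 Complex Pointwise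

variable {A : Type*} [CStarAlgebra A] [Nontrivial A]

lemma spec_dist {z : A} {μ : ℂ} (hμ : μ ∈ spectrum ℂ z) : ‖μ - 1‖ ≤ ‖z - 1‖ := by
  have h1 : μ - 1 ∈ spectrum ℂ z - {(1 : ℂ)} := Set.sub_mem_sub hμ rfl
  rw [spectrum.sub_singleton_eq] at h1
  have h2 : μ - 1 ∈ spectrum ℂ (z - 1) := by simpa using h1
  exact spectrum.norm_le_norm_of_mem h2

lemma contOn_log {z : A} {r : ℝ} (hr : r < 1) (hzr : ‖z - 1‖ ≤ r) :
    ContinuousOn Complex.log (spectrum ℂ z) := by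
  intro μ hμ
  have h1 : ‖μ - 1‖ < 1 := lt_of_le_of_lt (le_trans (spec_dist hμ) hzr) hr
  have h2 : μ ∈ Complex.slitPlane := by
    have := Complex.mem_slitPlane_of_norm_lt_one h1
    simpa using this
  exact (continuousAt_clog h2).continuousWithinAt

lemma cfc_logTaylor (z : A) (hz : IsStarNormal z) (N : ℕ) :
    cfc (p := IsStarNormal) (fun w : ℂ => logTaylor N (w - 1)) z
      = ∑ n ∈ Finset.range N, co n • (z - 1) ^ n := by
  have h1 : (fun w : ℂ => logTaylor N (w - 1))
      = ∑ n ∈ Finset.range N, (fun w : ℂ => co n * (w - 1) ^ n) := by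
    ext w
    simp only [logTaylor, Finset.sum_apply, co]
    refine Finset.sum_congr rfl fun j _ => ?_
    ring
  rw [h1, cfc_sum (fun n => fun w : ℂ => co n * (w - 1) ^ n) z _
    (fun i _ => by fun_prop)]
  refine Finset.sum_congr rfl fun n _ => ?_
  have hsub : cfc (p := IsStarNormal) (fun w : ℂ => w - 1) z = z - 1 := by
    have := cfc_sub (R := ℂ) (p := IsStarNormal) (fun w : ℂ => w) (fun _ : ℂ => 1) z
      (by fun_prop) (by fun_prop)
    rw [cfc_id' (R := ℂ) z, cfc_const (1 : ℂ) z, map_one] at this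
    exact this
  rw [cfc_const_mul (co n) (fun w : ℂ => (w - 1) ^ n) z (by fun_prop),
    cfc_pow (fun w : ℂ => w - 1) n z (by fun_prop), hsub]

end Stmt18x

namespace Stmt18x
open Stmt18 Complex

variable {A : Type*} [CStarAlgebra A] [Nontrivial A]

lemma cfc_log_eq {z : A} (hz : IsStarNormal z) {r : ℝ} (hr : r < 1) (hzr : ‖z - 1‖ ≤ r) :
    cfc (p := IsStarNormal) Complex.log z = lseries z := by
  have hr0 : 0 ≤ r := le_trans (norm_nonneg _) hzr
  have hr1 : 0 < 1 - r := by linarith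
  have hlog := contOn_log hr hzr
  set Sp : ℕ → A := fun N => ∑ n ∈ Finset.range N, co n • (z - 1) ^ n with hSp
  have hbound : ∀ N : ℕ, ‖cfc (p := IsStarNormal) Complex.log z - Sp (N + 1)‖
      ≤ r ^ (N + 1) * (1 - r)⁻¹ := by
    intro N
    rw [hSp]
    simp only []
    rw [← cfc_logTaylor z hz (N + 1), ← cfc_sub (R := ℂ) (p := IsStarNormal)
      Complex.log (fun w : ℂ => logTaylor (N + 1) (w - 1)) z hlog (by
        have : Continuous fun w : ℂ => logTaylor (N + 1) (w - 1) := by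
          simp only [logTaylor]
          fun_prop
        exact this.continuousOn)]
    refine norm_cfc_le (by positivity) fun μ hμ => ?_
    have hd : ‖μ - 1‖ ≤ r := le_trans (spec_dist hμ) hzr
    have hd1 : ‖μ - 1‖ < 1 := lt_of_le_of_lt hd hr
    have key := Complex.norm_log_sub_logTaylor_le N hd1
    have hμeq : (1 : ℂ) + (μ - 1) = μ := by ring
    rw [hμeq] at key
    refine key.trans ?_
    have h1 : ‖μ - 1‖ ^ (N + 1) ≤ r ^ (N + 1) := by gcongr
    have h2 : (1 - ‖μ - 1‖)⁻¹ ≤ (1 - r)⁻¹ := by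
      apply inv_anti₀ hr1
      linarith
    have hn1 : (0:ℝ) < 1 - ‖μ - 1‖ := by linarith
    have ha : (0:ℝ) ≤ ‖μ - 1‖ ^ (N + 1) * (1 - ‖μ - 1‖)⁻¹ :=
      mul_nonneg (pow_nonneg (norm_nonneg _) _) (inv_nonneg.2 hn1.le)
    calc ‖μ - 1‖ ^ (N + 1) * (1 - ‖μ - 1‖)⁻¹ / (N + 1)
        ≤ ‖μ - 1‖ ^ (N + 1) * (1 - ‖μ - 1‖)⁻¹ := by
          apply div_le_self ha
          exact_mod_cast Nat.le_add_left 1 N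
      _ ≤ r ^ (N + 1) * (1 - r)⁻¹ := by
          apply mul_le_mul h1 h2 (inv_nonneg.2 hn1.le) (by positivity)
  have hsum : Summable fun n : ℕ => co n • (z - 1) ^ n := summable_lterm hr hzr
  have htend1 : Filter.Tendsto Sp Filter.atTop (nhds (lseries z)) :=
    hsum.hasSum.tendsto_sum_nat
  have htend2 : Filter.Tendsto Sp Filter.atTop
      (nhds (cfc (p := IsStarNormal) Complex.log z)) := by
    rw [← Filter.tendsto_add_atTop_iff_nat 1]
    rw [tendsto_iff_norm_sub_tendsto_zero]
    have hz0 : Filter.Tendsto (fun N : ℕ => r ^ (N + 1) * (1 - r)⁻¹) Filter.atTop (nhds 0) := by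
      have := tendsto_pow_atTop_nhds_zero_of_lt_one hr0 hr
      have h2 := ((this.comp (Filter.tendsto_add_atTop_nat 1)).mul_const (1 - r)⁻¹)
      simpa using h2
    refine squeeze_zero (fun N => norm_nonneg _) (fun N => ?_) hz0
    rw [norm_sub_rev]
    exact hbound N
  exact tendsto_nhds_unique htend2 htend1

end Stmt18x

namespace Stmt18d
open Stmt18 Complex Metric Filter

variable {A : Type*} [CStarAlgebra A]

lemma hasDerivAt_pow_comp {p : ℝ → A} {q : A} {t : ℝ} (hp : HasDerivAt p q t) (n : ℕ) :
    HasDerivAt (fun s => (p s) ^ n)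
      (∑ i ∈ Finset.range n, (p t) ^ i * q * (p t) ^ (n - 1 - i)) t := by
  induction n with
  | zero => simpa using hasDerivAt_const t (1 : A)
  | succ m ih =>
      have h := ih.mul hp
      have heq : (fun s => (p s) ^ m * p s) = fun s => (p s) ^ (m + 1) := by
        ext s; rw [pow_succ]
      simp only [Pi.mul_def] at h
      rw [heq] at h
      convert h using 1
      rw [Finset.sum_range_succ]
      have h1 : (p t) ^ m * q * (p t) ^ (m + 1 - 1 - m) = (p t) ^ m * q := by
        simp
      rw [h1]
      congr 1
      rw [Finset.sum_mul]
      refine Finset.sum_congr rfl fun i hi => ?_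
      rw [Finset.mem_range] at hi
      have h2 : m + 1 - 1 - i = (m - 1 - i) + 1 := by omega
      rw [h2, pow_succ, mul_assoc, mul_assoc, mul_assoc]

lemma trace_sum_pow (T : A →L[ℂ] ℂ) (htr : ∀ a b : A, T (a * b) = T (b * a))
    (x q : A) (n : ℕ) :
    T (∑ i ∈ Finset.range n, x ^ i * q * x ^ (n - 1 - i)) = (n : ℂ) * T (q * x ^ (n - 1)) := by
  rw [map_sum]
  have h : ∀ i ∈ Finset.range n, T (x ^ i * q * x ^ (n - 1 - i)) = T (q * x ^ (n - 1)) := by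
    intro i hi
    rw [Finset.mem_range] at hi
    rw [htr, ← mul_assoc, ← pow_add]
    have he : n - 1 - i + i = n - 1 := by omega
    rw [he]
    exact htr _ _
  rw [Finset.sum_congr rfl h, Finset.sum_const, Finset.card_range, nsmul_eq_mul]

end Stmt18d

namespace Stmt18d
open Stmt18 Complex Metric Filter

variable {A : Type*} [CStarAlgebra A] [Nontrivial A]

lemma norm_pow_le₁ {x : A} {r : ℝ} (hr0 : 0 ≤ r) (h : ‖x‖ ≤ r) (m : ℕ) :
    ‖x ^ m‖ ≤ r ^ m := by
  rcases eq_or_ne m 0 with rfl | hm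
  · simp
  · exact norm_pow_le_of_le hr0 h m hm

lemma zero_mem_ball : (0 : ℝ) ∈ ball (0 : ℝ) 2 := by
  simp [mem_ball]

lemma key (T : A →L[ℂ] ℂ) (htr : ∀ a b : A, T (a * b) = T (b * a))
    {p q : ℝ → A}
    (hp : ∀ t ∈ ball (0:ℝ) 2, HasDerivAt p (q t) t)
    (hb : ∀ t ∈ ball (0:ℝ) 2, ‖p t - 1‖ ≤ 9/16)
    (hq : ∀ t ∈ ball (0:ℝ) 2, ‖q t‖ ≤ 4)
    {t : ℝ} (ht : t ∈ ball (0:ℝ) 2) :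
    HasDerivAt (fun s => T (lseries (p s))) (T (q t * geomInv (p t))) t := by
  set g : ℕ → ℝ → ℂ := fun n s => co n * T ((p s - 1) ^ n) with hg
  set g' : ℕ → ℝ → ℂ := fun n s => co n * ((n : ℂ) * T (q s * (p s - 1) ^ (n - 1))) with hg'
  set u : ℕ → ℝ := fun n => (4 * ‖T‖) * (9/16 : ℝ) ^ (n - 1) with hu_def
  have hρ : ((9:ℝ)/16) < 1 := by norm_num
  have hρ0 : (0:ℝ) ≤ 9/16 := by norm_num
  have hu : Summable u := by
    apply Summable.mul_left
    have h1 : Summable (fun n : ℕ => ((9:ℝ)/16) ^ ((n + 1) - 1)) := by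
      simpa using summable_geometric_of_lt_one hρ0 hρ
    exact (summable_nat_add_iff 1).mp h1
  have hderiv : ∀ (n : ℕ) (s : ℝ), s ∈ ball (0:ℝ) 2 → HasDerivAt (g n) (g' n s) s := by
    intro n s hs
    have h1 : HasDerivAt (fun y => p y - 1) (q s) s := (hp s hs).sub_const 1
    have h2 := hasDerivAt_pow_comp h1 n
    have h3 := ((T.restrictScalars ℝ).hasFDerivAt).comp_hasDerivAt s h2
    have h4 := h3.const_mul (co n)
    convert h4 using 1
    case e'_4 => rfl
    case e'_8 => rfl
    rw [hg']
    simp only []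
    exact congrArg (co n * ·) (trace_sum_pow T htr (p s - 1) (q s) n).symm
  have hbnd : ∀ (n : ℕ) (s : ℝ), s ∈ ball (0:ℝ) 2 → ‖g' n s‖ ≤ u n := by
    intro n s hs
    rw [hg']
    simp only []
    calc ‖co n * ((n : ℂ) * T (q s * (p s - 1) ^ (n - 1)))‖
        = ‖co n * (n : ℂ)‖ * ‖T (q s * (p s - 1) ^ (n - 1))‖ := by
          rw [← norm_mul]; ring_nf
      _ ≤ 1 * (‖T‖ * (4 * (9/16 : ℝ) ^ (n - 1))) := by
          apply mul_le_mul (norm_co_mul_n_le n) ?_ (norm_nonneg _) zero_le_one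
          refine (T.le_opNorm _).trans ?_
          apply mul_le_mul_of_nonneg_left ?_ (norm_nonneg T)
          calc ‖q s * (p s - 1) ^ (n - 1)‖ ≤ ‖q s‖ * ‖(p s - 1) ^ (n - 1)‖ := norm_mul_le _ _
            _ ≤ 4 * (9/16 : ℝ) ^ (n - 1) := by
                apply mul_le_mul (hq s hs) (norm_pow_le₁ hρ0 (hb s hs) _)
                  (norm_nonneg _) (by norm_num)
      _ = u n := by rw [hu_def]; ring
  have hg0 : Summable (fun n => g n 0) := by
    refine Summable.of_norm_bounded (g := fun n => ‖T‖ * (9/16 : ℝ) ^ n)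
      ((summable_geometric_of_lt_one hρ0 hρ).mul_left _) fun n => ?_
    rw [hg]
    simp only []
    calc ‖co n * T ((p 0 - 1) ^ n)‖ ≤ ‖co n‖ * ‖T ((p 0 - 1) ^ n)‖ := norm_mul_le _ _
      _ ≤ 1 * (‖T‖ * (9/16 : ℝ) ^ n) := by
          apply mul_le_mul (norm_co_le n) ?_ (norm_nonneg _) zero_le_one
          refine (T.le_opNorm _).trans ?_
          exact mul_le_mul_of_nonneg_left (norm_pow_le₁ hρ0 (hb 0 zero_mem_ball) n)
            (norm_nonneg T)
      _ = ‖T‖ * (9/16 : ℝ) ^ n := one_mul _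
  have main := hasDerivAt_tsum_of_isPreconnected hu isOpen_ball
    (convex_ball (0:ℝ) 2).isPreconnected hderiv hbnd zero_mem_ball hg0 ht
  have hev : (fun s => T (lseries (p s))) =ᶠ[nhds t] (fun s => ∑' n, g n s) := by
    refine Filter.eventually_of_mem (isOpen_ball.mem_nhds ht) fun s hs => ?_
    simp only [lseries]
    rw [ContinuousLinearMap.map_tsum T
      (summable_lterm (z := p s) hρ (hb s hs))]
    congr 1
    ext n
    rw [hg]
    simp only [map_smul, smul_eq_mul]
  have main2 : HasDerivAt (fun s => T (lseries (p s))) (∑' n, g' n t) t :=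
    main.congr_of_eventuallyEq hev
  convert main2 using 1
  -- identify the derivative value
  have hsum' : Summable (fun n => g' n t) :=
    Summable.of_norm_bounded (g := u) hu (fun n => hbnd n t ht)
  rw [Summable.tsum_eq_zero_add hsum']
  have hzero : g' 0 t = 0 := by rw [hg']; simp [co_zero]
  rw [hzero, zero_add]
  have hterm : ∀ k : ℕ, g' (k + 1) t
      = T (((-1 : ℂ)) ^ k • (q t * (p t - 1) ^ k)) := by
    intro k
    rw [hg']
    simp only [Nat.add_sub_cancel]
    rw [map_smul, smul_eq_mul, ← mul_assoc]
    congr 1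
    exact_mod_cast co_succ_mul k
  have hsummh : Summable (fun k : ℕ => ((-1 : ℂ)) ^ k • (q t * (p t - 1) ^ k)) := by
    refine Summable.of_norm_bounded (g := fun k => 4 * (9/16 : ℝ) ^ k)
      ((summable_geometric_of_lt_one hρ0 hρ).mul_left _) fun k => ?_
    calc ‖((-1 : ℂ)) ^ k • (q t * (p t - 1) ^ k)‖
        ≤ ‖((-1 : ℂ)) ^ k‖ * ‖q t * (p t - 1) ^ k‖ := norm_smul_le _ _
      _ ≤ 1 * (4 * (9/16 : ℝ) ^ k) := by
          apply mul_le_mul ?_ ?_ (norm_nonneg _) zero_le_one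
          · simp
          · calc ‖q t * (p t - 1) ^ k‖ ≤ ‖q t‖ * ‖(p t - 1) ^ k‖ := norm_mul_le _ _
              _ ≤ 4 * (9/16 : ℝ) ^ k :=
                  mul_le_mul (hq t ht) (norm_pow_le₁ hρ0 (hb t ht) _)
                    (norm_nonneg _) (by norm_num)
      _ = 4 * (9/16 : ℝ) ^ k := one_mul _
  calc T (q t * geomInv (p t))
      = T (∑' k : ℕ, ((-1 : ℂ)) ^ k • (q t * (p t - 1) ^ k)) := by
        congr 1
        have h5 : ∀ k : ℕ, ((-1 : ℂ)) ^ k • (q t * (p t - 1) ^ k)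
            = q t * (1 - p t) ^ k := by
          intro k
          have hpow : ((1:A) - p t) ^ k = ((-1 : ℂ)) ^ k • (p t - 1) ^ k := by
            rw [← smul_pow, neg_smul, one_smul, neg_sub]
          rw [hpow, mul_smul_comm]
        rw [geomInv]
        rw [tsum_congr h5]
        have hgeo : Summable (fun k : ℕ => (1 - p t) ^ k) := by
          apply summable_geometric_of_norm_lt_one
          rw [norm_sub_rev]
          exact lt_of_le_of_lt (hb t ht) hρ
        exact (hgeo.tsum_mul_left (q t)).symm
    _ = ∑' k : ℕ, T (((-1 : ℂ)) ^ k • (q t * (p t - 1) ^ k)) :=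
        ContinuousLinearMap.map_tsum T hsummh
    _ = ∑' k : ℕ, g' (k + 1) t := by
        exact tsum_congr fun k => (hterm k).symm

end Stmt18d

namespace Stmt18m
open Stmt18 Stmt18d Complex Metric Filter

variable {A : Type*} [CStarAlgebra A] [Nontrivial A]

lemma lseries_one : lseries (1 : A) = 0 := by
  rw [lseries]
  have h : ∀ n : ℕ, co n • ((1 : A) - 1) ^ n = 0 := by
    intro n
    rcases eq_or_ne n 0 with rfl | hn
    · simp [co_zero]
    · rw [sub_self, zero_pow hn, smul_zero]
  rw [tsum_congr h, tsum_zero]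

lemma trace_lseries_mul (T : A →L[ℂ] ℂ) (htr : ∀ a b : A, T (a * b) = T (b * a))
    {x y : A} (hx : ‖x‖ ≤ 1/8) (hy : ‖y‖ ≤ 1/8) :
    T (lseries ((1 + x) * (1 + y))) = T (lseries (1 + x)) + T (lseries (1 + y)) := by
  set pa : ℝ → A := fun s => 1 + s • x with hpa
  set pc : ℝ → A := fun s => 1 + s • y with hpc
  set pg : ℝ → A := fun s => pa s * pc s with hpg
  have hone : ‖(1 : A)‖ = 1 := norm_one
  -- basic facts on the ball
  have hsx : ∀ s ∈ ball (0:ℝ) 2, ‖s • x‖ ≤ 1/4 := by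
    intro s hs
    rw [mem_ball, dist_zero_right, Real.norm_eq_abs] at hs
    rw [norm_smul, Real.norm_eq_abs]
    calc |s| * ‖x‖ ≤ 2 * (1/8) := by
          apply mul_le_mul hs.le hx (norm_nonneg _) (by norm_num)
      _ = 1/4 := by norm_num
  have hsy : ∀ s ∈ ball (0:ℝ) 2, ‖s • y‖ ≤ 1/4 := by
    intro s hs
    rw [mem_ball, dist_zero_right, Real.norm_eq_abs] at hs
    rw [norm_smul, Real.norm_eq_abs]
    calc |s| * ‖y‖ ≤ 2 * (1/8) := by
          apply mul_le_mul hs.le hy (norm_nonneg _) (by norm_num)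
      _ = 1/4 := by norm_num
  have hba : ∀ s ∈ ball (0:ℝ) 2, ‖pa s - 1‖ ≤ 9/16 := by
    intro s hs
    rw [hpa]; simp only [add_sub_cancel_left]
    exact (hsx s hs).trans (by norm_num)
  have hbc : ∀ s ∈ ball (0:ℝ) 2, ‖pc s - 1‖ ≤ 9/16 := by
    intro s hs
    rw [hpc]; simp only [add_sub_cancel_left]
    exact (hsy s hs).trans (by norm_num)
  have hbg : ∀ s ∈ ball (0:ℝ) 2, ‖pg s - 1‖ ≤ 9/16 := by
    intro s hs
    have heq : pg s - 1 = s • x + s • y + (s • x) * (s • y) := by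
      rw [hpg, hpa, hpc]; simp only []
      noncomm_ring
      simp [smul_add, smul_smul]
    rw [heq]
    calc ‖s • x + s • y + (s • x) * (s • y)‖
        ≤ ‖s • x‖ + ‖s • y‖ + ‖(s • x) * (s • y)‖ := by
          exact (norm_add_le _ _).trans (by gcongr; exact norm_add_le _ _)
      _ ≤ 1/4 + 1/4 + 1/4 * (1/4) := by
          gcongr
          · exact hsx s hs
          · exact hsy s hs
          · exact (norm_mul_le _ _).trans
              (mul_le_mul (hsx s hs) (hsy s hs) (norm_nonneg _) (by norm_num))
      _ ≤ 9/16 := by norm_num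
  -- derivatives
  have hda : ∀ s : ℝ, HasDerivAt pa x s := by
    intro s
    have h1 : HasDerivAt (fun s : ℝ => s • x) ((1:ℝ) • x) s :=
      (hasDerivAt_id s).smul_const x
    rw [one_smul] at h1
    exact h1.const_add 1
  have hdc : ∀ s : ℝ, HasDerivAt pc y s := by
    intro s
    have h1 : HasDerivAt (fun s : ℝ => s • y) ((1:ℝ) • y) s :=
      (hasDerivAt_id s).smul_const y
    rw [one_smul] at h1
    exact h1.const_add 1
  set qg : ℝ → A := fun s => x * pc s + pa s * y with hqg
  have hdg : ∀ s : ℝ, HasDerivAt pg (qg s) s := fun s => (hda s).mul (hdc s)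
  -- norm bounds on p's and q's
  have hnpa : ∀ s ∈ ball (0:ℝ) 2, ‖pa s‖ ≤ 5/4 := by
    intro s hs
    calc ‖pa s‖ = ‖(1:A) + s • x‖ := rfl
      _ ≤ ‖(1:A)‖ + ‖s • x‖ := norm_add_le _ _
      _ ≤ 1 + 1/4 := by rw [hone]; gcongr; exact hsx s hs
      _ = 5/4 := by norm_num
  have hnpc : ∀ s ∈ ball (0:ℝ) 2, ‖pc s‖ ≤ 5/4 := by
    intro s hs
    calc ‖pc s‖ = ‖(1:A) + s • y‖ := rfl
      _ ≤ ‖(1:A)‖ + ‖s • y‖ := norm_add_le _ _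
      _ ≤ 1 + 1/4 := by rw [hone]; gcongr; exact hsy s hs
      _ = 5/4 := by norm_num
  have hqa : ∀ s ∈ ball (0:ℝ) 2, ‖x‖ ≤ 4 := fun s _ => hx.trans (by norm_num)
  have hqc : ∀ s ∈ ball (0:ℝ) 2, ‖y‖ ≤ 4 := fun s _ => hy.trans (by norm_num)
  have hqgb : ∀ s ∈ ball (0:ℝ) 2, ‖qg s‖ ≤ 4 := by
    intro s hs
    rw [hqg]
    calc ‖x * pc s + pa s * y‖ ≤ ‖x * pc s‖ + ‖pa s * y‖ := norm_add_le _ _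
      _ ≤ ‖x‖ * ‖pc s‖ + ‖pa s‖ * ‖y‖ := by gcongr <;> exact norm_mul_le _ _
      _ ≤ (1/8) * (5/4) + (5/4) * (1/8) :=
          add_le_add (mul_le_mul hx (hnpc s hs) (norm_nonneg _) (by norm_num))
            (mul_le_mul (hnpa s hs) hy (norm_nonneg _) (by norm_num))
      _ ≤ 4 := by norm_num
  -- invertibility facts
  have hia : ∀ s ∈ ball (0:ℝ) 2, ‖1 - pa s‖ < 1 := by
    intro s hs
    rw [norm_sub_rev]
    exact lt_of_le_of_lt (hba s hs) (by norm_num)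
  have hic : ∀ s ∈ ball (0:ℝ) 2, ‖1 - pc s‖ < 1 := by
    intro s hs
    rw [norm_sub_rev]
    exact lt_of_le_of_lt (hbc s hs) (by norm_num)
  have hig : ∀ s ∈ ball (0:ℝ) 2, ‖1 - pg s‖ < 1 := by
    intro s hs
    rw [norm_sub_rev]
    exact lt_of_le_of_lt (hbg s hs) (by norm_num)
  -- the function h and its derivative
  set h : ℝ → ℂ := fun s =>
    T (lseries (pg s)) - T (lseries (pa s)) - T (lseries (pc s)) with hh
  have hderiv : ∀ s ∈ ball (0:ℝ) 2, HasDerivAt h 0 s := by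
    intro s hs
    have k1 := key T htr (fun t ht => hdg t) hbg hqgb hs
    have k2 := key T htr (fun t ht => hda t) hba hqa hs
    have k3 := key T htr (fun t ht => hdc t) hbc hqc hs
    have hval : T (qg s * geomInv (pg s))
        - T (x * geomInv (pa s)) - T (y * geomInv (pc s)) = 0 := by
      set Ia := geomInv (pa s) with hIa
      set Ic := geomInv (pc s) with hIc
      have ha1 : pa s * Ia = 1 := mul_geomInv (hia s hs)
      have ha2 : Ia * pa s = 1 := geomInv_mul (hia s hs)
      have hc1 : pc s * Ic = 1 := mul_geomInv (hic s hs)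
      have hc2 : Ic * pc s = 1 := geomInv_mul (hic s hs)
      have hg2 : geomInv (pg s) * pg s = 1 := geomInv_mul (hig s hs)
      have hgprod : pg s * (Ic * Ia) = 1 := by
        rw [hpg]
        simp only []
        calc pa s * pc s * (Ic * Ia) = pa s * (pc s * Ic) * Ia := by noncomm_ring
          _ = 1 := by rw [hc1, mul_one, ha1]
      have hIg : geomInv (pg s) = Ic * Ia := left_inv_eq_right_inv hg2 hgprod
      rw [hIg, hqg]
      have hsplit : (x * pc s + pa s * y) * (Ic * Ia)
          = x * pc s * (Ic * Ia) + pa s * (y * (Ic * Ia)) := by noncomm_ring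
      rw [hsplit, map_add]
      have e1 : x * pc s * (Ic * Ia) = x * Ia := by
        calc x * pc s * (Ic * Ia) = x * ((pc s * Ic) * Ia) := by noncomm_ring
          _ = x * Ia := by rw [hc1, one_mul]
      have e2 : T (pa s * (y * (Ic * Ia))) = T (y * Ic) := by
        rw [htr]
        congr 1
        calc y * (Ic * Ia) * pa s = y * Ic * (Ia * pa s) := by noncomm_ring
          _ = y * Ic := by rw [ha2, mul_one]
      rw [e1, e2]
      ring
    have := ((k1.sub k2).sub k3)
    rw [hval] at this
    exact this
  -- MVT : h is constant on the ball
  have h10 : h 1 = h 0 := by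
    have hmvt := Convex.norm_image_sub_le_of_norm_hasDerivWithin_le
      (f := h) (f' := fun _ => (0 : ℂ)) (C := 0)
      (fun s hs => (hderiv s hs).hasDerivWithinAt)
      (fun s hs => by simp) (convex_ball (0:ℝ) 2) zero_mem_ball
      (by rw [mem_ball, dist_zero_right, Real.norm_eq_abs]; norm_num :
        (1:ℝ) ∈ ball (0:ℝ) 2)
    have : ‖h 1 - h 0‖ ≤ 0 := by simpa using hmvt
    have h0 : h 1 - h 0 = 0 := by
      rwa [← norm_le_zero_iff]
    exact sub_eq_zero.mp h0
  have hzero : h 0 = 0 := by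
    rw [hh]
    simp only [hpg, hpa, hpc, zero_smul, add_zero, one_mul]
    rw [lseries_one]
    simp
  have hone' : h 1 = T (lseries ((1 + x) * (1 + y))) - T (lseries (1 + x))
      - T (lseries (1 + y)) := by
    rw [hh]
    simp only [hpg, hpa, hpc, one_smul]
  have hfin := h10.trans hzero
  rw [hone'] at hfin
  linear_combination hfin

end Stmt18m

namespace Stmt18f
open Stmt18 Stmt18x Stmt18m Complex Metric

variable {A : Type*} [CStarAlgebra A] [Nontrivial A]

lemma conj_pow' {v m : A} (hv1 : star v * v = 1) (hv2 : v * star v = 1) (n : ℕ) :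
    (v * m * star v) ^ n = v * m ^ n * star v := by
  induction n with
  | zero => simpa using hv2.symm
  | succ k ih =>
      rw [pow_succ, pow_succ, ih]
      calc v * m ^ k * star v * (v * m * star v)
          = v * m ^ k * (star v * v) * m * star v := by noncomm_ring
        _ = v * (m ^ k * m) * star v := by rw [hv1]; noncomm_ring

lemma trace_lseries_conj (T : A →L[ℂ] ℂ) (htr : ∀ a b : A, T (a * b) = T (b * a))
    {b v : A} (hv1 : star v * v = 1) (hv2 : v * star v = 1)
    {r : ℝ} (hr : r < 1) (hb : ‖b - 1‖ ≤ r) (hc : ‖v * b * star v - 1‖ ≤ r) :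
    T (lseries (v * b * star v)) = T (lseries b) := by
  have hsub : v * b * star v - 1 = v * (b - 1) * star v := by
    rw [mul_sub, sub_mul, mul_one, hv2]
  rw [lseries, lseries, ContinuousLinearMap.map_tsum T (summable_lterm hr hc),
    ContinuousLinearMap.map_tsum T (summable_lterm hr hb)]
  refine tsum_congr fun n => ?_
  rw [map_smul, map_smul]
  congr 1
  rw [hsub, conj_pow' hv1 hv2]
  calc T (v * (b - 1) ^ n * star v) = T (v * ((b - 1) ^ n * star v)) := by rw [mul_assoc]
    _ = T ((b - 1) ^ n * star v * v) := htr _ _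
    _ = T ((b - 1) ^ n) := by rw [mul_assoc, hv1, mul_one]

end Stmt18f


open Stmt18 Stmt18x Stmt18m Stmt18f Complex Metric

/-- Additivity of the rotation number `(2πi)⁻¹ τ(log(u v u* v*))` in the second
variable: there is a universal constant `δ > 0` such that whenever the multiplicative
commutators of `(u,v)`, `(u,w)` and `(u,vw)` are at distance `< 2` from `1` and avoid
`−1` in their spectra, and the pairwise commutator norms are `< δ`, the rotation
number of `(u, vw)` is the sum of those of `(u,v)` and `(u,w)`. -/
theorem stmt_18 :
    ∃ δ : ℝ, 0 < δ ∧
      ∀ (A : Type) [CStarAlgebra A],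
        ∀ τ : A →ₗ[ℂ] ℂ, IsTracialState τ →
          ∀ u v w : A, u ∈ unitary A → v ∈ unitary A → w ∈ unitary A →
            ‖u * v * star u * star v - 1‖ < 2 →
            ‖u * w * star u * star w - 1‖ < 2 →
            ‖u * (v * w) * star u * star (v * w) - 1‖ < 2 →
            (-1 : ℂ) ∉ spectrum ℂ (u * v * star u * star v) →
            (-1 : ℂ) ∉ spectrum ℂ (u * w * star u * star w) →
            (-1 : ℂ) ∉ spectrum ℂ (u * (v * w) * star u * star (v * w)) →
            ‖u * v - v * u‖ < δ → ‖u * w - w * u‖ < δ → ‖v * w - w * v‖ < δ →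
            (2 * (Real.pi : ℂ) * Complex.I)⁻¹ *
                τ (cfc (p := IsStarNormal) Complex.log
                  (u * (v * w) * star u * star (v * w))) =
              (2 * (Real.pi : ℂ) * Complex.I)⁻¹ *
                  τ (cfc (p := IsStarNormal) Complex.log (u * v * star u * star v)) +
                (2 * (Real.pi : ℂ) * Complex.I)⁻¹ *
                  τ (cfc (p := IsStarNormal) Complex.log (u * w * star u * star w)) := by
  refine ⟨1/8, by norm_num, ?_⟩
  intro A _ τ hτ u v w hu hv hw _ _ _ _ _ _ hδuv hδuw _
  rcases subsingleton_or_nontrivial A with hS | hN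
  · have hz : ∀ z : A, z = 0 := fun z => Subsingleton.elim z 0
    rw [hz (cfc (p := IsStarNormal) Complex.log (u * (v * w) * star u * star (v * w))),
      hz (cfc (p := IsStarNormal) Complex.log (u * v * star u * star v)),
      hz (cfc (p := IsStarNormal) Complex.log (u * w * star u * star w)), map_zero]
    ring
  -- nontrivial case
  obtain ⟨hcont, -, -, htrτ⟩ := hτ
  set T : A →L[ℂ] ℂ := ⟨τ, hcont⟩ with hT
  have htr : ∀ a b : A, T (a * b) = T (b * a) := htrτ
  obtain ⟨hu1, hu2⟩ := Unitary.mem_iff.mp hu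
  obtain ⟨hv1, hv2⟩ := Unitary.mem_iff.mp hv
  obtain ⟨hw1, hw2⟩ := Unitary.mem_iff.mp hw
  set a : A := u * v * star u * star v with ha
  set b : A := u * w * star u * star w with hb
  set c : A := v * b * star v with hc
  -- membership in unitary group
  have hamem : a ∈ unitary A :=
    mul_mem (mul_mem (mul_mem hu hv) (Unitary.star_mem hu)) (Unitary.star_mem hv)
  have hbmem : b ∈ unitary A :=
    mul_mem (mul_mem (mul_mem hu hw) (Unitary.star_mem hu)) (Unitary.star_mem hw)
  have hcmem : c ∈ unitary A := mul_mem (mul_mem hv hbmem) (Unitary.star_mem hv)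
  have hacmem : a * c ∈ unitary A := mul_mem hamem hcmem
  have hnorm_unit : ∀ {z : A}, z ∈ unitary A → IsStarNormal z := by
    intro z hz
    obtain ⟨h1, h2⟩ := Unitary.mem_iff.mp hz
    exact ⟨h1.trans h2.symm⟩
  have han : IsStarNormal a := hnorm_unit hamem
  have hbn : IsStarNormal b := hnorm_unit hbmem
  have hacn : IsStarNormal (a * c) := hnorm_unit hacmem
  -- norm bounds
  have hdua : ‖a - 1‖ ≤ 1/8 := by
    have h1 : (v * u) * (star u * star v) = 1 := by
      have : (v * u) * (star u * star v) = v * (u * star u) * star v := by noncomm_ring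
      rw [this, hu2, mul_one, hv2]
    have h2 : a - 1 = (u * v - v * u) * (star u * star v) := by
      rw [← h1, ha]; noncomm_ring
    rw [h2]
    calc ‖(u * v - v * u) * (star u * star v)‖
        ≤ ‖u * v - v * u‖ * ‖star u * star v‖ := norm_mul_le _ _
      _ ≤ (1/8) * 1 := by
          apply mul_le_mul hδuv.le ?_ (norm_nonneg _) (by norm_num)
          calc ‖star u * star v‖ ≤ ‖star u‖ * ‖star v‖ := norm_mul_le _ _
            _ = 1 := by
                rw [norm_star, norm_star, CStarRing.norm_of_mem_unitary hu,
                  CStarRing.norm_of_mem_unitary hv, mul_one]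
      _ = 1/8 := by norm_num
  have hdub : ‖b - 1‖ ≤ 1/8 := by
    have h1 : (w * u) * (star u * star w) = 1 := by
      have : (w * u) * (star u * star w) = w * (u * star u) * star w := by noncomm_ring
      rw [this, hu2, mul_one, hw2]
    have h2 : b - 1 = (u * w - w * u) * (star u * star w) := by
      rw [← h1, hb]; noncomm_ring
    rw [h2]
    calc ‖(u * w - w * u) * (star u * star w)‖
        ≤ ‖u * w - w * u‖ * ‖star u * star w‖ := norm_mul_le _ _
      _ ≤ (1/8) * 1 := by
          apply mul_le_mul hδuw.le ?_ (norm_nonneg _) (by norm_num)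
          calc ‖star u * star w‖ ≤ ‖star u‖ * ‖star w‖ := norm_mul_le _ _
            _ = 1 := by
                rw [norm_star, norm_star, CStarRing.norm_of_mem_unitary hu,
                  CStarRing.norm_of_mem_unitary hw, mul_one]
      _ = 1/8 := by norm_num
  have hcsub : c - 1 = v * (b - 1) * star v := by
    rw [hc, mul_sub, sub_mul, mul_one, hv2]
  have hduc : ‖c - 1‖ ≤ 1/8 := by
    rw [hcsub]
    calc ‖v * (b - 1) * star v‖ ≤ ‖v * (b - 1)‖ * ‖star v‖ := norm_mul_le _ _
      _ ≤ ‖v‖ * ‖b - 1‖ * ‖star v‖ := by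
          apply mul_le_mul_of_nonneg_right (norm_mul_le _ _) (norm_nonneg _)
      _ = ‖b - 1‖ := by
          rw [norm_star, CStarRing.norm_of_mem_unitary hv, one_mul, mul_one]
      _ ≤ 1/8 := hdub
  have hdac : ‖a * c - 1‖ ≤ 9/32 := by
    have h1 : a * c - 1 = (a - 1) + (c - 1) + (a - 1) * (c - 1) := by noncomm_ring
    rw [h1]
    calc ‖(a - 1) + (c - 1) + (a - 1) * (c - 1)‖
        ≤ ‖a - 1‖ + ‖c - 1‖ + ‖(a - 1) * (c - 1)‖ :=
          (norm_add_le _ _).trans (by gcongr; exact norm_add_le _ _)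
      _ ≤ 1/8 + 1/8 + (1/8) * (1/8) :=
          add_le_add (add_le_add hdua hduc) ((norm_mul_le _ _).trans
              (mul_le_mul hdua hduc (norm_nonneg _) (by norm_num)))
      _ ≤ 9/32 := by norm_num
  -- the main algebraic identity
  have hmain : u * (v * w) * star u * star (v * w) = a * c := by
    rw [star_mul]
    have e1 : a * c = u * v * star u * (star v * v) * b * star v := by
      rw [ha, hc]; noncomm_ring
    rw [e1, hv1, mul_one]
    have e2 : u * v * star u * b * star v
        = u * v * (star u * u) * w * star u * star w * star v := by
      rw [hb]; noncomm_ring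
    rw [e2, hu1, mul_one]
    noncomm_ring
  rw [hmain]
  -- convert cfc logs to power series
  have hρ : (9:ℝ)/32 < 1 := by norm_num
  have e_ac : cfc (p := IsStarNormal) Complex.log (a * c) = lseries (a * c) :=
    cfc_log_eq hacn hρ hdac
  have e_a : cfc (p := IsStarNormal) Complex.log a = lseries a :=
    cfc_log_eq han hρ (hdua.trans (by norm_num))
  have e_b : cfc (p := IsStarNormal) Complex.log b = lseries b :=
    cfc_log_eq hbn hρ (hdub.trans (by norm_num))
  have hτT : ∀ z : A, τ z = T z := fun z => rfl
  rw [e_ac, e_a, e_b, hτT, hτT, hτT]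
  -- additivity of the trace of the log series
  have hadd : T (lseries (a * c)) = T (lseries a) + T (lseries c) := by
    have h1 : a = 1 + (a - 1) := by abel
    have h2 : c = 1 + (c - 1) := by abel
    calc T (lseries (a * c)) = T (lseries ((1 + (a-1)) * (1 + (c-1)))) := by
          rw [← h1, ← h2]
      _ = T (lseries (1 + (a-1))) + T (lseries (1 + (c-1))) :=
          trace_lseries_mul T htr hdua hduc
      _ = T (lseries a) + T (lseries c) := by rw [← h1, ← h2]
  have hconj : T (lseries c) = T (lseries b) := by
    rw [hc]
    exact trace_lseries_conj T htr hv1 hv2 (r := 9/32) hρ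
      (hdub.trans (by norm_num)) (by rw [← hc]; exact hduc.trans (by norm_num))
  rw [hadd, hconj]
  ring

end
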